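/- Let a and b be positive integers with max{a,b} ≥ 2, and let k = 2. For the complete bipartite graph K_{a,b}, CV_2(K_{a,b}) = min{a,b}. -/

import Mathlib

open SimpleGraph

/-- A graph is in a *failure state* for `k` if every connected component has
diameter less than `k`, i.e. every pair of mutually reachable vertices is at
distance less than `k`. -/
def FailureState {V : Type*} (G : SimpleGraph V) (k : ℕ) : Prop :=
  ∀ u v : V, G.Reachable u v → G.dist u v < k

/-- `G` contains `m` pairwise vertex-disjoint paths of length `k`. -/
def HasDisjointPaths {V : Type*} (G : SimpleGraph V) (k m : ℕ) : Prop :=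
  ∃ (u v : Fin m → V) (P : ∀ i, G.Walk (u i) (v i)),
    (∀ i, (P i).IsPath ∧ (P i).length = k) ∧
    ∀ i j, i ≠ j → ∀ x, x ∈ (P i).support → x ∉ (P j).support

/-- The `k`-diameter component vertex connectivity: the minimum size of a set of
vertices whose deletion leaves every component with diameter less than `k`. -/
noncomputable def CV {V : Type*} (G : SimpleGraph V) (k : ℕ) : ℕ :=
  sInf {n | ∃ V' : Finset V, V'.card = n ∧
    FailureState (G.induce ((V' : Set V))ᶜ) k}

/-- The `k`-diameter component edge connectivity: the minimum size of a set of
edges whose deletion leaves every component with diameter less than `k`. -/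
noncomputable def CE {V : Type*} (G : SimpleGraph V) (k : ℕ) : ℕ :=
  sInf {n | ∃ E' : Finset (Sym2 V), (E' : Set (Sym2 V)) ⊆ G.edgeSet ∧ E'.card = n ∧
    FailureState (G.deleteEdges (E' : Set (Sym2 V))) k}

/-- The `k`-diameter component connectivity function: the minimum over all
`p`-element vertex sets `V'` of `CE k (G - V')`. -/
noncomputable def CM {V : Type*} (G : SimpleGraph V) (k p : ℕ) : ℕ :=
  sInf {q | ∃ V' : Finset V, V'.card = p ∧
    CE (G.induce ((V' : Set V))ᶜ) k = q}

lemma failure_left (a b : ℕ) :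
    FailureState ((completeBipartiteGraph (Fin a) (Fin b)).induce
      (((Finset.univ.map ⟨Sum.inl, Sum.inl_injective⟩ : Finset (Fin a ⊕ Fin b)) : Set (Fin a ⊕ Fin b))ᶜ)) 2 := by
  have hbot : (completeBipartiteGraph (Fin a) (Fin b)).induce
      (((Finset.univ.map ⟨Sum.inl, Sum.inl_injective⟩ : Finset (Fin a ⊕ Fin b)) : Set (Fin a ⊕ Fin b))ᶜ) = ⊥ := by
    ext u v
    simp only [comap_adj, bot_adj, iff_false]
    obtain ⟨u, hu⟩ := u
    obtain ⟨v, hv⟩ := v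
    cases u with
    | inl x => exact absurd (by simp) hu
    | inr y =>
      cases v with
      | inl x => exact absurd (by simp) hv
      | inr y' => simp
  rw [hbot]
  intro u v h
  rw [reachable_bot] at h
  subst h
  simp [SimpleGraph.dist_self]

lemma failure_right (a b : ℕ) :
    FailureState ((completeBipartiteGraph (Fin a) (Fin b)).induce
      (((Finset.univ.map ⟨Sum.inr, Sum.inr_injective⟩ : Finset (Fin a ⊕ Fin b)) : Set (Fin a ⊕ Fin b))ᶜ)) 2 := by
  have hbot : (completeBipartiteGraph (Fin a) (Fin b)).induce
      (((Finset.univ.map ⟨Sum.inr, Sum.inr_injective⟩ : Finset (Fin a ⊕ Fin b)) : Set (Fin a ⊕ Fin b))ᶜ) = ⊥ := by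
    ext u v
    simp only [comap_adj, bot_adj, iff_false]
    obtain ⟨u, hu⟩ := u
    obtain ⟨v, hv⟩ := v
    cases u with
    | inr y => exact absurd (by simp) hu
    | inl x =>
      cases v with
      | inr y => exact absurd (by simp) hv
      | inl x' => simp
  rw [hbot]
  intro u v h
  rw [reachable_bot] at h
  subst h
  simp [SimpleGraph.dist_self]

lemma notfail_left (a b : ℕ) (s : Set (Fin a ⊕ Fin b)) (x₁ x₂ : Fin a) (y : Fin b)
    (hx : x₁ ≠ x₂) (h1 : Sum.inl x₁ ∈ s) (h2 : Sum.inl x₂ ∈ s) (h3 : Sum.inr y ∈ s) :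
    ¬ FailureState ((completeBipartiteGraph (Fin a) (Fin b)).induce s) 2 := by
  set G' := (completeBipartiteGraph (Fin a) (Fin b)).induce s with hG'
  intro hF
  set u : s := ⟨Sum.inl x₁, h1⟩
  set v : s := ⟨Sum.inl x₂, h2⟩
  set w : s := ⟨Sum.inr y, h3⟩
  have hadj1 : G'.Adj u w := by simp [hG', u, w]
  have hadj2 : G'.Adj w v := by simp [hG', v, w]
  have hreach : G'.Reachable u v := hadj1.reachable.trans hadj2.reachable
  have hd := hF u v hreach
  have h0 : G'.dist u v ≠ 0 := by
    intro h
    exact hx (Sum.inl_injective (Subtype.ext_iff.mp (hreach.dist_eq_zero_iff.mp h)))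
  have h1' : G'.dist u v ≠ 1 := by
    intro h
    have := SimpleGraph.dist_eq_one_iff_adj.mp h
    simp [hG', u, v] at this
  omega

lemma notfail_right (a b : ℕ) (s : Set (Fin a ⊕ Fin b)) (y₁ y₂ : Fin b) (x : Fin a)
    (hy : y₁ ≠ y₂) (h1 : Sum.inr y₁ ∈ s) (h2 : Sum.inr y₂ ∈ s) (h3 : Sum.inl x ∈ s) :
    ¬ FailureState ((completeBipartiteGraph (Fin a) (Fin b)).induce s) 2 := by
  set G' := (completeBipartiteGraph (Fin a) (Fin b)).induce s with hG'
  intro hF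
  set u : s := ⟨Sum.inr y₁, h1⟩
  set v : s := ⟨Sum.inr y₂, h2⟩
  set w : s := ⟨Sum.inl x, h3⟩
  have hadj1 : G'.Adj u w := by simp [hG', u, w]
  have hadj2 : G'.Adj w v := by simp [hG', v, w]
  have hreach : G'.Reachable u v := hadj1.reachable.trans hadj2.reachable
  have hd := hF u v hreach
  have h0 : G'.dist u v ≠ 0 := by
    intro h
    exact hy (Sum.inr_injective (Subtype.ext_iff.mp (hreach.dist_eq_zero_iff.mp h)))
  have h1' : G'.dist u v ≠ 1 := by
    intro h
    have := SimpleGraph.dist_eq_one_iff_adj.mp h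
    simp [hG', u, v] at this
  omega

/-- For the complete bipartite graph with part sizes
`a, b ≥ 1` and `max a b ≥ 2`, `CV 2 (K a b) = min a b`. -/
theorem CV_completeBipartite_two (a b : ℕ) (ha : 0 < a) (hb : 0 < b)
    (hab : 2 ≤ max a b) :
    CV (completeBipartiteGraph (Fin a) (Fin b)) 2 = min a b := by
  have hmem : min a b ∈ {n | ∃ V' : Finset (Fin a ⊕ Fin b), V'.card = n ∧
      FailureState ((completeBipartiteGraph (Fin a) (Fin b)).induce ((V' : Set (Fin a ⊕ Fin b)))ᶜ) 2} := by
    rcases le_total a b with h | h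
    · exact ⟨Finset.univ.map ⟨Sum.inl, Sum.inl_injective⟩,
        by simp [min_eq_left h], failure_left a b⟩
    · exact ⟨Finset.univ.map ⟨Sum.inr, Sum.inr_injective⟩,
        by simp [min_eq_right h], failure_right a b⟩
  refine le_antisymm (Nat.sInf_le hmem) (le_csInf ⟨_, hmem⟩ ?_)
  rintro n ⟨V', hcard, hfail⟩
  by_contra hlt
  push_neg at hlt
  rw [← hcard] at hlt
  -- counting
  classical
  set RA := Finset.univ.filter (fun x : Fin a => Sum.inl x ∉ V') with hRA
  set RB := Finset.univ.filter (fun y : Fin b => Sum.inr y ∉ V') with hRB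
  set CA := Finset.univ.filter (fun x : Fin a => Sum.inl x ∈ V') with hCA
  set CB := Finset.univ.filter (fun y : Fin b => Sum.inr y ∈ V') with hCB
  have hsplitA : CA.card + RA.card = a := by
    have := Finset.card_filter_add_card_filter_not
      (s := (Finset.univ : Finset (Fin a))) (p := fun x => Sum.inl x ∈ V')
    simpa using this
  have hsplitB : CB.card + RB.card = b := by
    have := Finset.card_filter_add_card_filter_not
      (s := (Finset.univ : Finset (Fin b))) (p := fun y => Sum.inr y ∈ V')
    simpa using this
  have hCAcard : CA.card ≤ (V'.filter (fun z => z.isLeft)).card := by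
    apply Finset.card_le_card_of_injOn (fun x => Sum.inl x)
    · intro x hx
      simp only [Finset.mem_coe, hCA, Finset.mem_filter] at hx
      simp [hx.2]
    · intro x _ x' _ h
      exact Sum.inl_injective h
  have hCBcard : CB.card ≤ (V'.filter (fun z => ¬ z.isLeft)).card := by
    apply Finset.card_le_card_of_injOn (fun y => Sum.inr y)
    · intro y hy
      simp only [Finset.mem_coe, hCB, Finset.mem_filter] at hy
      simp [hy.2]
    · intro y _ y' _ h
      exact Sum.inr_injective h
  have hVsplit : (V'.filter (fun z => z.isLeft)).card + (V'.filter (fun z => ¬ z.isLeft)).card = V'.card :=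
    Finset.card_filter_add_card_filter_not _
  have hsum : CA.card + CB.card < min a b := by omega
  have hRApos : 0 < RA.card := by omega
  have hRBpos : 0 < RB.card := by omega
  have hbig : 2 ≤ RA.card ∨ 2 ≤ RB.card := by omega
  obtain ⟨y0, hy0⟩ := Finset.card_pos.mp hRBpos
  obtain ⟨x0, hx0⟩ := Finset.card_pos.mp hRApos
  rcases hbig with h2 | h2
  · obtain ⟨x₁, hx₁, x₂, hx₂, hne⟩ := Finset.one_lt_card.mp h2
    refine notfail_left a b _ x₁ x₂ y0 hne ?_ ?_ ?_ hfail
    · simpa using (Finset.mem_filter.mp hx₁).2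
    · simpa using (Finset.mem_filter.mp hx₂).2
    · simpa using (Finset.mem_filter.mp hy0).2
  · obtain ⟨y₁, hy₁, y₂, hy₂, hne⟩ := Finset.one_lt_card.mp h2
    refine notfail_right a b _ y₁ y₂ x0 hne ?_ ?_ ?_ hfail
    · simpa using (Finset.mem_filter.mp hy₁).2
    · simpa using (Finset.mem_filter.mp hy₂).2
    · simpa using (Finset.mem_filter.mp hx0).2
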